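/- Weak duality for discrete optimal stopping: for every 𝓕-martingale M = (M_n)_{n=0}^N and every index 0 ≤ n ≤ N, the Snell envelope satisfies Y*_n ≤ 𝔼[ max_{n ≤ m ≤ N} (G_m − M_m + M_n) | 𝓕_n ] ℙ-almost surely. -/

import Mathlib

open MeasureTheory Filter

/-- A finite-horizon martingale with respect to the filtration `ℱ` up to time `N`:
an adapted, integrable process with the one-step martingale property. -/
def IsFinMartingale {Ω : Type*} {m0 : MeasurableSpace Ω} (μ : Measure Ω)
    (ℱ : Filtration ℕ m0) (N : ℕ) (M : ℕ → Ω → ℝ) : Prop :=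
  (∀ n, n ≤ N → StronglyMeasurable[ℱ n] (M n)) ∧
  (∀ n, n ≤ N → Integrable (M n) μ) ∧
  ∀ n, n < N → μ[M (n + 1)|ℱ n] =ᵐ[μ] M n

lemma integrable_finset_sup' {Ω : Type*} {m0 : MeasurableSpace Ω} {μ : Measure Ω}
    {ι : Type*} (s : Finset ι) (hs : s.Nonempty) (f : ι → Ω → ℝ)
    (hf : ∀ i ∈ s, Integrable (f i) μ) :
    Integrable (fun ω => s.sup' hs (fun i => f i ω)) μ := by
  induction hs using Finset.Nonempty.cons_induction with
  | singleton i => simpa using hf i (by simp)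
  | cons i s hi hs ih =>
    have heq : (fun ω => (Finset.cons i s hi).sup' (Finset.cons_nonempty hi) fun j => f j ω)
        = fun ω => f i ω ⊔ s.sup' hs fun j => f j ω := funext fun ω => Finset.sup'_cons hs _
    rw [heq]
    exact (hf i (by simp)).sup (ih fun j hj => hf j (Finset.mem_cons_of_mem hj))

/-- Weak duality: for every martingale `M` and every `n ≤ N`, the Snell envelope
`Y n` is a.s. bounded above by the conditional expectation (given `ℱ n`) of
`max_{n ≤ m ≤ N} (G m − M m + M n)`. -/
theorem weak_duality
    {Ω : Type*} {m0 : MeasurableSpace Ω} {μ : Measure Ω} [IsProbabilityMeasure μ]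
    (N : ℕ) (hN : 1 ≤ N) (ℱ : Filtration ℕ m0)
    (G : ℕ → Ω → ℝ) (hGadapted : Adapted ℱ G) (hGint : ∀ n, Integrable (G n) μ)
    (Y : ℕ → Ω → ℝ)
    (hYN : ∀ ω, Y N ω = G N ω)
    (hYrec : ∀ n, n < N → ∀ ω, Y n ω = max (G n ω) ((μ[Y (n + 1)|ℱ n]) ω))
    (M : ℕ → Ω → ℝ) (hM : IsFinMartingale μ ℱ N M)
    (n : ℕ) (hn : n ≤ N) :
    Y n ≤ᵐ[μ]
      μ[fun ω => (Finset.Icc n N).sup' (Finset.nonempty_Icc.mpr hn)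
        (fun m => G m ω - M m ω + M n ω)|ℱ n] := by
  obtain ⟨hMadp, hMint, hMmart⟩ := hM
  -- the "dual" process H k = max_{k ≤ m ≤ N} (G m - M m)
  have Hint : ∀ k (hk : k ≤ N),
      Integrable (fun ω => (Finset.Icc k N).sup' (Finset.nonempty_Icc.mpr hk)
        (fun m => G m ω - M m ω)) μ := by
    intro k hk
    exact integrable_finset_sup' _ _ _ fun i hi =>
      (hGint i).sub (hMint i (Finset.mem_Icc.mp hi).2)
  -- integrability of Y
  have Yint : ∀ k, k ≤ N → Integrable (Y k) μ := by
    intro k hk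
    rcases eq_or_lt_of_le hk with rfl | hk
    · have : Y k = G k := funext hYN
      rw [this]; exact hGint k
    · have : Y k = (G k) ⊔ (μ[Y (k + 1)|ℱ k]) := by
        funext ω; rw [hYrec k hk ω, Pi.sup_apply]
      rw [this]
      exact (hGint k).sup integrable_condExp
  -- the key backward induction
  have key : ∀ d k (hk : k + d = N),
      Y k ≤ᵐ[μ] μ[fun ω => (Finset.Icc k N).sup' (Finset.nonempty_Icc.mpr (by omega))
        (fun m => G m ω - M m ω)|ℱ k] + M k := by
    intro d
    induction d with
    | zero =>
      intro k hk
      have hkN : k = N := by omega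
      subst hkN
      have heq : (fun ω => (Finset.Icc k k).sup' (Finset.nonempty_Icc.mpr (by omega))
          (fun m => G m ω - M m ω)) = G k - M k := by
        funext ω
        simp [Finset.Icc_self]
      rw [heq, condExp_of_stronglyMeasurable (ℱ.le k)
        ((hGadapted k).stronglyMeasurable.sub (hMadp k le_rfl)) ((hGint k).sub (hMint k le_rfl))]
      filter_upwards with ω
      simp [hYN ω]
    | succ d ih =>
      intro k hk
      have hkN : k < N := by omega
      have hk1 : k + 1 ≤ N := by omega
      have hIH := ih (k + 1) (by omega)
      -- conditional expectation of the IH inequality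
      have hb := condExp_mono (m := ℱ k) (μ := μ) (Yint (k + 1) hk1)
        (integrable_condExp.add (hMint (k + 1) hk1)) hIH
      have hc := condExp_add (m := ℱ k) (μ := μ)
        (integrable_condExp (f := fun ω => (Finset.Icc (k+1) N).sup'
          (Finset.nonempty_Icc.mpr (by omega)) (fun m => G m ω - M m ω)) (m := ℱ (k+1)))
        (hMint (k + 1) hk1)
      have hd := condExp_condExp_of_le (μ := μ)
        (f := fun ω => (Finset.Icc (k+1) N).sup'
          (Finset.nonempty_Icc.mpr (by omega)) (fun m => G m ω - M m ω))
        (ℱ.mono (Nat.le_succ k)) (ℱ.le (k + 1))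
      have he := hMmart k hkN
      have hf := condExp_mono (m := ℱ k) (μ := μ) (Hint (k + 1) hk1) (Hint k (by omega))
        (Eventually.of_forall fun ω =>
          Finset.sup'_mono (fun m => G m ω - M m ω)
            (Finset.Icc_subset_Icc (Nat.le_succ k) le_rfl) (Finset.nonempty_Icc.mpr (by omega)))
      have hg : (G k - M k : Ω → ℝ) ≤ᵐ[μ]
          μ[fun ω => (Finset.Icc k N).sup' (Finset.nonempty_Icc.mpr (by omega))
            (fun m => G m ω - M m ω)|ℱ k] := by
        have := condExp_mono (m := ℱ k) (μ := μ) ((hGint k).sub (hMint k hkN.le))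
          (Hint k hkN.le)
          (Eventually.of_forall fun ω =>
            Finset.le_sup' (fun m => G m ω - M m ω) (Finset.mem_Icc.mpr ⟨le_rfl, hkN.le⟩))
        rwa [condExp_of_stronglyMeasurable (ℱ.le k)
          ((hGadapted k).stronglyMeasurable.sub (hMadp k hkN.le)) ((hGint k).sub (hMint k hkN.le))] at this
      filter_upwards [hb, hc, hd, he, hf, hg] with ω hb hc hd he hf hg
      rw [hYrec k hkN ω]
      have h1 : (μ[Y (k + 1)|ℱ k]) ω ≤
          (μ[fun ω => (Finset.Icc k N).sup' (Finset.nonempty_Icc.mpr (by omega))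
            (fun m => G m ω - M m ω)|ℱ k]) ω + M k ω := by
        calc (μ[Y (k + 1)|ℱ k]) ω ≤ _ := hb
          _ = _ + _ := hc
          _ ≤ _ := by rw [hd, he] at *; exact add_le_add_left hf _
      have h2 : G k ω ≤
          (μ[fun ω => (Finset.Icc k N).sup' (Finset.nonempty_Icc.mpr (by omega))
            (fun m => G m ω - M m ω)|ℱ k]) ω + M k ω := by
        have := hg
        simp only [Pi.sub_apply] at this
        linarith
      exact max_le h2 h1
  -- conclude
  have hkey := key (N - n) n (by omega)
  -- rewrite the target integrand
  have heq : (fun ω => (Finset.Icc n N).sup' (Finset.nonempty_Icc.mpr hn)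
      (fun m => G m ω - M m ω + M n ω)) =
      (fun ω => (Finset.Icc n N).sup' (Finset.nonempty_Icc.mpr hn)
        (fun m => G m ω - M m ω)) + M n := by
    funext ω
    simp only [Pi.add_apply]
    exact (Finset.comp_sup'_eq_sup'_comp (Finset.nonempty_Icc.mpr hn)
      (fun x => x + M n ω) (fun a b => by simpa using (max_add_add_right a b (M n ω)).symm)).symm
  have hsum := condExp_add (m := ℱ n) (μ := μ) (Hint n hn) (hMint n hn)
  have hMn : μ[M n|ℱ n] = M n :=
    condExp_of_stronglyMeasurable (ℱ.le n) (hMadp n hn) (hMint n hn)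
  rw [heq]
  filter_upwards [hkey, hsum] with ω hkey hsum
  rw [hsum, Pi.add_apply, hMn]
  exact hkey
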